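/- Let H be a Hopf algebra over a commutative ring k and X a right-right Yetter–Drinfeld module over H. Then the square antipode σ : X → X defined by σ(x) = x₍₀₎ ◁ S(x₍₁₎) is bijective, with inverse σ⁻¹(x) = x₍₀₎ ◁ S⁻²(x₍₁₎) computed after applying the coaction, provided S is invertible; explicitly σ⁻¹ satisfies σ ∘ σ⁻¹ = σ⁻¹ ∘ σ = id, which follows from the identity x₍₀₎ ◁ (S(x₍₁₎) x₍₂₎) = x for all x ∈ X. -/

import Mathlib

open TensorProduct

noncomputable section

universe u v₁ v₂

/-- A finite-sum representation of an element of a tensor product. -/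
structure TRepr (R : Type u) [CommRing R] {M N : Type u} [AddCommGroup M] [Module R M]
    [AddCommGroup N] [Module R N] (t : M ⊗[R] N) where
  ι : Type u
  index : Finset ι
  fst : ι → M
  snd : ι → N
  eq : ∑ i ∈ index, fst i ⊗ₜ[R] snd i = t

/-- The old (Mathlib Dec 2024) `Coalgebra.Repr`, whose index type `ι` was a field. -/
structure CoalgRepr (R : Type u) {A : Type*}
    [CommSemiring R] [AddCommMonoid A] [Module R A] [CoalgebraStruct R A] (a : A) where
  {ι : Type*}
  (index : Finset ι)
  (left : ι → A)
  (right : ι → A)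
  (eq : ∑ i ∈ index, left i ⊗ₜ[R] right i = CoalgebraStruct.comul a)

section Defs

variable (R : Type u) [CommRing R] (H : Type u) [Ring H] [HopfAlgebra R H]

/-- The comultiplication of `H` as a linear map. -/
def Δm : H →ₗ[R] H ⊗[R] H := Coalgebra.comul

/-- The counit of `H`. -/
def εm : H →ₗ[R] R := Coalgebra.counit

/-- The antipode of `H`. -/
def Sm : H →ₗ[R] H := HopfAlgebra.antipode (R := R) (A := H)

/-- The multiplication of `H` as a linear map on the tensor square. -/
def mm : H ⊗[R] H →ₗ[R] H := LinearMap.mul' R H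

/-- A right-right Yetter–Drinfeld (crossed) module over the Hopf algebra `H`:
a right `H`-module and right `H`-comodule `X` satisfying the compatibility
`δ(x ◁ h) = (x₍₀₎ ◁ h₍₂₎) ⊗ S(h₍₁₎) x₍₁₎ h₍₃₎` (stated for every Sweedler
representation of the iterated comultiplication of `h` and of the coaction of `x`). -/
structure YD (X : Type u) [AddCommGroup X] [Module R X] where
  act : X ⊗[R] H →ₗ[R] X
  coact : X →ₗ[R] X ⊗[R] H
  act_one : ∀ x : X, act (x ⊗ₜ[R] 1) = x
  act_mul : ∀ (x : X) (g h : H), act (x ⊗ₜ[R] (g * h)) = act (act (x ⊗ₜ[R] g) ⊗ₜ[R] h)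
  coact_counit : ∀ x : X,
    (TensorProduct.rid R X) ((LinearMap.lTensor X (εm R H)) (coact x)) = x
  coact_coassoc : (TensorProduct.assoc R X H H).toLinearMap ∘ₗ
      LinearMap.rTensor H coact ∘ₗ coact = LinearMap.lTensor X (Δm R H) ∘ₗ coact
  compat : ∀ (x : X) (h : H) (r : CoalgRepr.{u, u, v₁} R h)
      (r' : (i : r.ι) → CoalgRepr.{u, u, v₂} R (r.right i)) (c : TRepr R (coact x)),
      coact (act (x ⊗ₜ[R] h)) =
        ∑ i ∈ r.index, ∑ j ∈ (r' i).index, ∑ k ∈ c.index,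
          act (c.fst k ⊗ₜ[R] (r' i).left j) ⊗ₜ[R]
            (Sm R H (r.left i) * c.snd k * (r' i).right j)

/-- A right `H`-module structure on `X` (action written as a linear map on `X ⊗ H`). -/
structure MAct (X : Type u) [AddCommGroup X] [Module R X] where
  act : X ⊗[R] H →ₗ[R] X
  act_one : ∀ x : X, act (x ⊗ₜ[R] 1) = x
  act_mul : ∀ (x : X) (g h : H), act (x ⊗ₜ[R] (g * h)) = act (act (x ⊗ₜ[R] g) ⊗ₜ[R] h)

end Defs

section Maps

variable {R : Type u} [CommRing R] {H : Type u} [Ring H] [HopfAlgebra R H]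
variable {X Y Z : Type u} [AddCommGroup X] [Module R X] [AddCommGroup Y] [Module R Y]
  [AddCommGroup Z] [Module R Z]

/-- The diagonal (tensor product) right action of `H` on `X ⊗ Y`:
`(x ⊗ y) ◁ h = (x ◁ h₍₁₎) ⊗ (y ◁ h₍₂₎)`. -/
def dAct (aX : X ⊗[R] H →ₗ[R] X) (aY : Y ⊗[R] H →ₗ[R] Y) :
    (X ⊗[R] Y) ⊗[R] H →ₗ[R] X ⊗[R] Y :=
  TensorProduct.map aX aY ∘ₗ (TensorProduct.tensorTensorTensorComm R X Y H H).toLinearMap ∘ₗ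
    LinearMap.lTensor (X ⊗[R] Y) (Δm R H)

/-- The codiagonal right coaction of `H` on `X ⊗ Y`:
`δ(x ⊗ y) = (x₍₀₎ ⊗ y₍₀₎) ⊗ y₍₁₎ x₍₁₎`. -/
def cCoact (cX : X →ₗ[R] X ⊗[R] H) (cY : Y →ₗ[R] Y ⊗[R] H) :
    X ⊗[R] Y →ₗ[R] (X ⊗[R] Y) ⊗[R] H :=
  LinearMap.lTensor (X ⊗[R] Y) (mm R H ∘ₗ (TensorProduct.comm R H H).toLinearMap) ∘ₗ
    (TensorProduct.tensorTensorTensorComm R X H Y H).toLinearMap ∘ₗ TensorProduct.map cX cY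

/-- The Yetter–Drinfeld braiding `Ψ(x ⊗ y) = y₍₀₎ ⊗ (x ◁ y₍₁₎)`. -/
def braid (aX : X ⊗[R] H →ₗ[R] X) (cY : Y →ₗ[R] Y ⊗[R] H) :
    X ⊗[R] Y →ₗ[R] Y ⊗[R] X :=
  LinearMap.lTensor Y aX ∘ₗ (TensorProduct.assoc R Y X H).toLinearMap ∘ₗ
    LinearMap.rTensor H (TensorProduct.comm R X Y).toLinearMap ∘ₗ
    (TensorProduct.assoc R X Y H).symm.toLinearMap ∘ₗ LinearMap.lTensor X cY

/-- The candidate inverse braiding `Ψ⁻¹(y ⊗ x) = (x ◁ S'(y₍₁₎)) ⊗ y₍₀₎`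
built from a map `S'` (intended to be the inverse of the antipode). -/
def braidInv (aX : X ⊗[R] H →ₗ[R] X) (cY : Y →ₗ[R] Y ⊗[R] H) (S' : H →ₗ[R] H) :
    Y ⊗[R] X →ₗ[R] X ⊗[R] Y :=
  LinearMap.rTensor Y aX ∘ₗ (TensorProduct.comm R Y (X ⊗[R] H)).toLinearMap ∘ₗ
    LinearMap.lTensor Y (TensorProduct.comm R H X).toLinearMap ∘ₗ
    (TensorProduct.assoc R Y H X).toLinearMap ∘ₗ
    LinearMap.rTensor X (LinearMap.lTensor Y S') ∘ₗ LinearMap.rTensor X cY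

/-- The square antipode `σ(x) = x₍₀₎ ◁ S(x₍₁₎)` of a crossed module. -/
def sqAnt (aX : X ⊗[R] H →ₗ[R] X) (cX : X →ₗ[R] X ⊗[R] H) : X →ₗ[R] X :=
  aX ∘ₗ LinearMap.lTensor X (Sm R H) ∘ₗ cX

end Maps

section ReprConv

def CoalgRepr.toRepr {R : Type u} {A : Type*} [CommSemiring R] [AddCommMonoid A] [Module R A]
    [CoalgebraStruct R A] {a : A} (r : CoalgRepr R a) : Coalgebra.Repr R a r.ι where
  index := r.index
  left := r.left
  right := r.right
  eq := r.eq

def CoalgRepr.arbitrary (R : Type u) {A : Type u} [CommSemiring R] [AddCommMonoid A] [Module R A]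
    [CoalgebraStruct R A] (a : A) : CoalgRepr R a where
  ι := A × A
  index := (Coalgebra.Repr.arbitrary R a).index
  left := (Coalgebra.Repr.arbitrary R a).left
  right := (Coalgebra.Repr.arbitrary R a).right
  eq := (Coalgebra.Repr.arbitrary R a).eq

lemma CoalgRepr.sum_tmul_counit {R : Type u} {A : Type u} [CommRing R] [AddCommGroup A]
    [Module R A] [Coalgebra R A] {a : A} (r : CoalgRepr R a) :
    ∑ i ∈ r.index, r.left i ⊗ₜ[R] Coalgebra.counit (R := R) (r.right i) = a ⊗ₜ[R] 1 :=
  Coalgebra.sum_tmul_counit_eq r.toRepr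

lemma CoalgRepr.sum_mul_antipode {R : Type u} {A : Type u} [CommRing R] [Ring A]
    [HopfAlgebra R A] {a : A} (r : CoalgRepr R a) :
    ∑ i ∈ r.index, r.left i * HopfAlgebra.antipode R (r.right i) =
      algebraMap R A (Coalgebra.counit a) :=
  HopfAlgebra.sum_mul_antipode_eq_algebraMap_counit r.toRepr

lemma CoalgRepr.sum_antipode_mul {R : Type u} {A : Type u} [CommRing R] [Ring A]
    [HopfAlgebra R A] {a : A} (r : CoalgRepr R a) :
    ∑ i ∈ r.index, HopfAlgebra.antipode R (r.left i) * r.right i =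
      algebraMap R A (Coalgebra.counit a) :=
  HopfAlgebra.sum_antipode_mul_eq_algebraMap_counit r.toRepr

end ReprConv

section Conv
variable {R : Type u} [CommRing R] {C : Type u} [AddCommGroup C] [Module R C] [Coalgebra R C]
  {A : Type u} [Ring A] [Algebra R A] {M : Type u} [AddCommGroup M] [Module R M]

lemma sum_repr_apply (φ : C ⊗[R] C →ₗ[R] M) {x : C} (r : CoalgRepr R x) :
    ∑ i ∈ r.index, φ (r.left i ⊗ₜ[R] r.right i) = φ (Coalgebra.comul x) := by
  rw [← r.eq, map_sum]

lemma sum_reprL (φ : (C ⊗[R] C) ⊗[R] C →ₗ[R] M) {x : C} (r : CoalgRepr R x)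
    (r' : ∀ i : r.ι, CoalgRepr R (r.left i)) :
    ∑ i ∈ r.index, ∑ j ∈ (r' i).index,
      φ (((r' i).left j ⊗ₜ[R] (r' i).right j) ⊗ₜ[R] r.right i)
      = φ (LinearMap.rTensor C Coalgebra.comul (Coalgebra.comul x)) := by
  have : ∀ i ∈ r.index, ∑ j ∈ (r' i).index,
      φ (((r' i).left j ⊗ₜ[R] (r' i).right j) ⊗ₜ[R] r.right i)
      = (φ ∘ₗ (TensorProduct.mk R (C ⊗[R] C) C).flip (r.right i)) (Coalgebra.comul (r.left i)) :=
    fun i _ => by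
      simpa using sum_repr_apply (φ ∘ₗ (TensorProduct.mk R (C ⊗[R] C) C).flip (r.right i)) (r' i)
  rw [Finset.sum_congr rfl this]
  simpa using sum_repr_apply (φ ∘ₗ LinearMap.rTensor C (Coalgebra.comul (R := R) (A := C))) r

lemma sum_reprR (φ : C ⊗[R] (C ⊗[R] C) →ₗ[R] M) {x : C} (r : CoalgRepr R x)
    (r' : ∀ i : r.ι, CoalgRepr R (r.right i)) :
    ∑ i ∈ r.index, ∑ j ∈ (r' i).index,
      φ (r.left i ⊗ₜ[R] ((r' i).left j ⊗ₜ[R] (r' i).right j))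
      = φ (LinearMap.lTensor C Coalgebra.comul (Coalgebra.comul x)) := by
  have : ∀ i ∈ r.index, ∑ j ∈ (r' i).index,
      φ (r.left i ⊗ₜ[R] ((r' i).left j ⊗ₜ[R] (r' i).right j))
      = (φ ∘ₗ TensorProduct.mk R C (C ⊗[R] C) (r.left i)) (Coalgebra.comul (r.right i)) :=
    fun i _ => by
      simpa using sum_repr_apply (φ ∘ₗ TensorProduct.mk R C (C ⊗[R] C) (r.left i)) (r' i)
  rw [Finset.sum_congr rfl this]
  simpa using sum_repr_apply (φ ∘ₗ LinearMap.lTensor C (Coalgebra.comul (R := R) (A := C))) r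

/-- Convolution product on `Hom(C, A)`. -/
def conv (f g : C →ₗ[R] A) : C →ₗ[R] A :=
  LinearMap.mul' R A ∘ₗ TensorProduct.map f g ∘ₗ Coalgebra.comul

/-- convolution unit -/
def cunit : C →ₗ[R] A := Algebra.linearMap R A ∘ₗ Coalgebra.counit

lemma conv_repr (f g : C →ₗ[R] A) {x : C} (r : CoalgRepr R x) :
    conv f g x = ∑ i ∈ r.index, f (r.left i) * g (r.right i) := by
  simpa [conv] using (sum_repr_apply (LinearMap.mul' R A ∘ₗ TensorProduct.map f g) r).symm

lemma conv_assoc (f g k : C →ₗ[R] A) : conv (conv f g) k = conv f (conv g k) := by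
  ext x
  set r := CoalgRepr.arbitrary R x
  rw [conv_repr (conv f g) k r, conv_repr f (conv g k) r]
  have hL : ∀ i ∈ r.index, conv f g (r.left i) * k (r.right i)
      = ∑ j ∈ (CoalgRepr.arbitrary R (r.left i)).index,
        ((LinearMap.mul' R A ∘ₗ LinearMap.rTensor A (LinearMap.mul' R A) ∘ₗ
          TensorProduct.map (TensorProduct.map f g) k)
          (((CoalgRepr.arbitrary R (r.left i)).left j ⊗ₜ[R]
            (CoalgRepr.arbitrary R (r.left i)).right j) ⊗ₜ[R] r.right i)) := by
    intro i _
    rw [conv_repr f g (CoalgRepr.arbitrary R (r.left i)), Finset.sum_mul]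
    refine Finset.sum_congr rfl fun j _ => ?_
    simp [mul_assoc]
  have hR : ∀ i ∈ r.index, f (r.left i) * conv g k (r.right i)
      = ∑ j ∈ (CoalgRepr.arbitrary R (r.right i)).index,
        ((LinearMap.mul' R A ∘ₗ LinearMap.lTensor A (LinearMap.mul' R A) ∘ₗ
          TensorProduct.map f (TensorProduct.map g k))
          (r.left i ⊗ₜ[R] ((CoalgRepr.arbitrary R (r.right i)).left j ⊗ₜ[R]
            (CoalgRepr.arbitrary R (r.right i)).right j))) := by
    intro i _
    rw [conv_repr g k (CoalgRepr.arbitrary R (r.right i)), Finset.mul_sum]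
    refine Finset.sum_congr rfl fun j _ => ?_
    simp [mul_assoc]
  rw [Finset.sum_congr rfl hL, Finset.sum_congr rfl hR, sum_reprL _ r, sum_reprR _ r,
    ← Coalgebra.coassoc_apply]
  have key : (LinearMap.mul' R A ∘ₗ LinearMap.lTensor A (LinearMap.mul' R A) ∘ₗ
      TensorProduct.map f (TensorProduct.map g k)) ∘ₗ (TensorProduct.assoc R C C C).toLinearMap
      = LinearMap.mul' R A ∘ₗ LinearMap.rTensor A (LinearMap.mul' R A) ∘ₗ
        TensorProduct.map (TensorProduct.map f g) k := by
    apply TensorProduct.ext_threefold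
    intro a b c
    simp [mul_assoc]
  exact (LinearMap.congr_fun key _).symm

lemma conv_cunit_left (f : C →ₗ[R] A) : conv cunit f = f := by
  ext x
  have hsplit : TensorProduct.map (cunit (R := R) (A := A) (C := C)) f
      = TensorProduct.map (Algebra.linearMap R A) f ∘ₗ
        LinearMap.rTensor C (Coalgebra.counit (R := R) (A := C)) := by
    apply TensorProduct.ext'; intro a b; simp [cunit]
  simp only [conv, LinearMap.comp_apply, hsplit, Coalgebra.rTensor_counit_comul]
  simp

lemma conv_cunit_right (f : C →ₗ[R] A) : conv f cunit = f := by
  ext x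
  have hsplit : TensorProduct.map f (cunit (R := R) (A := A) (C := C))
      = TensorProduct.map f (Algebra.linearMap R A) ∘ₗ
        LinearMap.lTensor C (Coalgebra.counit (R := R) (A := C)) := by
    apply TensorProduct.ext'; intro a b; simp [cunit]
  simp only [conv, LinearMap.comp_apply, hsplit, Coalgebra.lTensor_counit_comul]
  simp [Algebra.smul_def, Algebra.commutes]

lemma conv_eq_of (f g h : C →ₗ[R] A) (h1 : conv f g = cunit) (h2 : conv g h = cunit) :
    f = h := by
  have := conv_assoc f g h
  rw [h1, h2, conv_cunit_left, conv_cunit_right] at this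
  exact this.symm
end Conv

section Hopf
variable {R : Type u} [CommRing R] {H : Type u} [Ring H] [HopfAlgebra R H]

local notation "S" => HopfAlgebra.antipode (R := R) (A := H)
local notation "mm" => LinearMap.mul' R H

lemma conv_antipode_id : conv (S) (LinearMap.id : H →ₗ[R] H) = cunit := by
  unfold conv cunit
  rw [show TensorProduct.map (S) (LinearMap.id : H →ₗ[R] H) = LinearMap.rTensor H (S) from rfl]
  exact HopfAlgebra.mul_antipode_rTensor_comul

lemma conv_id_antipode : conv (LinearMap.id : H →ₗ[R] H) (S) = cunit := by
  unfold conv cunit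
  rw [show TensorProduct.map (LinearMap.id : H →ₗ[R] H) (S) = LinearMap.lTensor H (S) from rfl]
  exact HopfAlgebra.mul_antipode_lTensor_comul

lemma map_mul'_comul : TensorProduct.map (mm) (mm) ∘ₗ
    (Coalgebra.comul (R := R) (A := H ⊗[R] H)) = Coalgebra.comul (R := R) (A := H) ∘ₗ mm := by
  apply TensorProduct.ext'
  intro a b
  simp only [LinearMap.comp_apply, TensorProduct.comul_tmul,
    TensorProduct.AlgebraTensorModule.tensorTensorTensorComm_eq, LinearMap.mul'_apply,
    Bialgebra.comul_mul]
  have key : ∀ t s : H ⊗[R] H, TensorProduct.map (mm) (mm)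
      ((TensorProduct.tensorTensorTensorComm R H H H H) (t ⊗ₜ[R] s)) = t * s := by
    intro t s
    induction t using TensorProduct.induction_on with
    | zero => simp
    | add u v hu hv => simp [add_tmul, hu, hv, add_mul]
    | tmul u v =>
      induction s using TensorProduct.induction_on with
      | zero => simp
      | add p q hp hq => simp [tmul_add, hp, hq, mul_add]
      | tmul p q => simp [Algebra.TensorProduct.tmul_mul_tmul]
  exact key _ _

lemma counit_mul' : (Coalgebra.counit (R := R) (A := H)) ∘ₗ (mm)
    = Coalgebra.counit (R := R) (A := H ⊗[R] H) := by
  apply TensorProduct.ext'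
  intro a b
  simp [mul_comm]

lemma conv_claim1 : conv (S ∘ₗ mm) (mm) = (cunit : H ⊗[R] H →ₗ[R] H) := by
  have hsplit : TensorProduct.map ((S) ∘ₗ (mm)) (mm)
      = LinearMap.rTensor H (S) ∘ₗ TensorProduct.map (mm) (mm) := by
    apply TensorProduct.ext'; intro t s; simp
  apply TensorProduct.ext'
  intro a b
  have h2 := LinearMap.congr_fun map_mul'_comul (a ⊗ₜ[R] b)
  simp only [LinearMap.comp_apply, LinearMap.mul'_apply] at h2
  simp only [conv, cunit, LinearMap.comp_apply, hsplit, h2]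
  rw [HopfAlgebra.mul_antipode_rTensor_comul_apply]
  simp [mul_comm]


/-- `(a₁ ⊗ a₂) ⊗ c ↦ a₁ * (c * S a₂)` -/
def Kmap : (H ⊗[R] H) ⊗[R] H →ₗ[R] H :=
  (mm) ∘ₗ LinearMap.lTensor H ((mm) ∘ₗ LinearMap.lTensor H (S) ∘ₗ
    (TensorProduct.comm R H H).toLinearMap) ∘ₗ (TensorProduct.assoc R H H H).toLinearMap

@[simp] lemma Kmap_tmul (a b c : H) : (Kmap : (H ⊗[R] H) ⊗[R] H →ₗ[R] H) ((a ⊗ₜ[R] b) ⊗ₜ[R] c)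
    = a * (c * (S) b) := by
  simp [Kmap]

lemma conv_claim2 : conv (mm) ((mm) ∘ₗ TensorProduct.map (S) (S) ∘ₗ
    (TensorProduct.comm R H H).toLinearMap) = (cunit : H ⊗[R] H →ₗ[R] H) := by
  have hG : (mm) ∘ₗ TensorProduct.map (mm) ((mm) ∘ₗ TensorProduct.map (S) (S) ∘ₗ
      (TensorProduct.comm R H H).toLinearMap) ∘ₗ
      (TensorProduct.tensorTensorTensorComm R H H H H).toLinearMap
      = (Kmap) ∘ₗ LinearMap.lTensor (H ⊗[R] H) ((mm) ∘ₗ LinearMap.lTensor H (S)) := by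
    apply TensorProduct.ext_fourfold'
    intro a b c d
    simp [mul_assoc]
  apply TensorProduct.ext'
  intro a b
  have h0 : (conv (mm) ((mm) ∘ₗ TensorProduct.map (S) (S) ∘ₗ
      (TensorProduct.comm R H H).toLinearMap)) (a ⊗ₜ[R] b)
      = ((mm) ∘ₗ TensorProduct.map (mm) ((mm) ∘ₗ TensorProduct.map (S) (S) ∘ₗ
      (TensorProduct.comm R H H).toLinearMap) ∘ₗ
      (TensorProduct.tensorTensorTensorComm R H H H H).toLinearMap)
        ((Coalgebra.comul a) ⊗ₜ[R] (Coalgebra.comul b)) := by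
    simp [conv, TensorProduct.comul_tmul, TensorProduct.AlgebraTensorModule.tensorTensorTensorComm_eq]
  rw [h0, hG]
  have h1 : (LinearMap.lTensor (H ⊗[R] H) ((mm) ∘ₗ LinearMap.lTensor H (S)))
      ((Coalgebra.comul a) ⊗ₜ[R] (Coalgebra.comul b))
      = (Coalgebra.comul a) ⊗ₜ[R] (algebraMap R H (Coalgebra.counit b)) := by
    simp [HopfAlgebra.mul_antipode_lTensor_comul_apply]
  rw [LinearMap.comp_apply, h1]
  have h2 : (Kmap) ((Coalgebra.comul a) ⊗ₜ[R] (algebraMap R H (Coalgebra.counit b)))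
      = Coalgebra.counit (R := R) b • (Kmap) ((Coalgebra.comul a) ⊗ₜ[R] (1 : H)) := by
    rw [Algebra.algebraMap_eq_smul_one, tmul_smul, map_smul]
  have h3 : (Kmap) ((Coalgebra.comul a) ⊗ₜ[R] (1 : H))
      = (mm) (LinearMap.lTensor H (S) (Coalgebra.comul a)) := by
    have : (Kmap ∘ₗ (TensorProduct.mk R (H ⊗[R] H) H).flip 1 : H ⊗[R] H →ₗ[R] H)
        = (mm) ∘ₗ LinearMap.lTensor H (S) := by
      apply TensorProduct.ext'; intro u v; simp
    exact LinearMap.congr_fun this (Coalgebra.comul a)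
  rw [h2, h3, HopfAlgebra.mul_antipode_lTensor_comul_apply]
  have hc : (cunit : H ⊗[R] H →ₗ[R] H) (a ⊗ₜ[R] b)
      = algebraMap R H (Coalgebra.counit a * Coalgebra.counit b) := by
    simp [cunit, mul_comm]
  rw [hc, Algebra.smul_def, ← map_mul, mul_comm]

lemma antipode_mul_anti (a b : H) : (S) (a * b) = (S) b * (S) a := by
  have := conv_eq_of ((S) ∘ₗ (mm)) (mm) ((mm) ∘ₗ TensorProduct.map (S) (S) ∘ₗ
    (TensorProduct.comm R H H).toLinearMap) conv_claim1 conv_claim2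
  have h := LinearMap.congr_fun this (a ⊗ₜ[R] b)
  simpa using h

@[simp] lemma antipode_one : (S) (1 : H) = 1 := by
  have h := HopfAlgebra.mul_antipode_rTensor_comul_apply (R := R) (a := (1 : H))
  have h2 : Coalgebra.comul (R := R) (1 : H) = (1 : H) ⊗ₜ[R] 1 := by
    rw [Bialgebra.comul_one]; rfl
  rw [h2] at h
  simpa using h
end Hopf

section Sinv
variable {R : Type u} [CommRing R] {H : Type u} [Ring H] [HopfAlgebra R H]

local notation "S" => HopfAlgebra.antipode (R := R) (A := H)
local notation "mm" => LinearMap.mul' R H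

variable (S' : H →ₗ[R] H)
  (hS'1 : ∀ h : H, S' (HopfAlgebra.antipode (R := R) (A := H) h) = h)
  (hS'2 : ∀ h : H, HopfAlgebra.antipode (R := R) (A := H) (S' h) = h)

include hS'1 hS'2

lemma S'_one : S' 1 = 1 := by
  have := hS'1 1
  rwa [antipode_one] at this

lemma S'_mul (a b : H) : S' (a * b) = S' b * S' a := by
  have h1 : (S) (S' b * S' a) = a * b := by rw [antipode_mul_anti, hS'2, hS'2]
  rw [← h1, hS'1]

lemma S'_algebraMap (r : R) : S' (algebraMap R H r) = algebraMap R H r := by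
  rw [Algebra.algebraMap_eq_smul_one, map_smul, S'_one S' hS'1 hS'2]

lemma sum_right_mul_S'_left {h : H} (r : CoalgRepr R h) :
    ∑ i ∈ r.index, r.right i * S' (r.left i) = algebraMap R H (Coalgebra.counit h) := by
  have hS : (S) (∑ i ∈ r.index, r.right i * S' (r.left i))
      = algebraMap R H (Coalgebra.counit h) := by
    rw [map_sum]
    have : ∀ i ∈ r.index, (S) (r.right i * S' (r.left i)) =
        r.left i * (S) (r.right i) := by
      intro i _
      rw [antipode_mul_anti, hS'2]
    rw [Finset.sum_congr rfl this]
    exact CoalgRepr.sum_mul_antipode r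
  have := congrArg S' hS
  rwa [hS'1, S'_algebraMap S' hS'1 hS'2] at this

lemma sum_S'S'_left_mul_S'_right {h : H} (r : CoalgRepr R h) :
    ∑ i ∈ r.index, S' (S' (r.left i)) * S' (r.right i) = algebraMap R H (Coalgebra.counit h) := by
  have hS : (S) (∑ i ∈ r.index, S' (S' (r.left i)) * S' (r.right i))
      = algebraMap R H (Coalgebra.counit h) := by
    rw [map_sum]
    have : ∀ i ∈ r.index, (S) (S' (S' (r.left i)) * S' (r.right i)) =
        r.right i * S' (r.left i) := by
      intro i _
      rw [antipode_mul_anti, hS'2, hS'2]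
    rw [Finset.sum_congr rfl this]
    exact sum_right_mul_S'_left S' hS'1 hS'2 r
  have := congrArg S' hS
  rwa [hS'1, S'_algebraMap S' hS'1 hS'2] at this

/-- `u : h ↦ ∑ h₂ * S'(h₁)` as a map on the tensor square. -/
def uCore : H ⊗[R] H →ₗ[R] H :=
  (mm) ∘ₗ TensorProduct.map LinearMap.id S' ∘ₗ (TensorProduct.comm R H H).toLinearMap

lemma uCore_comul : (uCore S') ∘ₗ (Coalgebra.comul (R := R) (A := H))
    = Algebra.linearMap R H ∘ₗ Coalgebra.counit := by
  ext h
  have h1 := sum_repr_apply (M := H) (uCore S') (CoalgRepr.arbitrary R h)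
  have h2 : ∀ i ∈ (CoalgRepr.arbitrary R h).index,
      uCore S' ((CoalgRepr.arbitrary R h).left i ⊗ₜ[R] (CoalgRepr.arbitrary R h).right i)
      = (CoalgRepr.arbitrary R h).right i * S' ((CoalgRepr.arbitrary R h).left i) := by
    intro i _; simp [uCore]
  rw [Finset.sum_congr rfl h2, sum_right_mul_S'_left S' hS'1 hS'2 (CoalgRepr.arbitrary R h)]
    at h1
  simpa using h1.symm

lemma sumD {h : H} (r : CoalgRepr R h) (r' : ∀ i : r.ι, CoalgRepr R (r.right i)) :
    ∑ i ∈ r.index, ∑ j ∈ (r' i).index,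
      ((r' i).left j * S' (r.left i)) ⊗ₜ[R] (r' i).right j = (1 : H) ⊗ₜ[R] h := by
  set W : H ⊗[R] (H ⊗[R] H) →ₗ[R] H ⊗[R] H :=
    LinearMap.rTensor H (uCore S') ∘ₗ (TensorProduct.assoc R H H H).symm.toLinearMap with hW
  have hterm : ∀ i ∈ r.index, ∀ j ∈ (r' i).index,
      ((r' i).left j * S' (r.left i)) ⊗ₜ[R] (r' i).right j
      = W (r.left i ⊗ₜ[R] ((r' i).left j ⊗ₜ[R] (r' i).right j)) := by
    intro i _ j _
    simp [hW, uCore]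
  rw [Finset.sum_congr rfl fun i hi => Finset.sum_congr rfl (hterm i hi)]
  rw [sum_reprR W r r']
  rw [← Coalgebra.coassoc_apply]
  have hWa : W ∘ₗ (TensorProduct.assoc R H H H).toLinearMap
      = LinearMap.rTensor H (uCore S') := by
    apply TensorProduct.ext_threefold
    intro a b c
    simp [hW]
  have := LinearMap.congr_fun hWa
    (LinearMap.rTensor H (Coalgebra.comul (R := R) (A := H)) (Coalgebra.comul (R := R) h))
  simp only [LinearMap.comp_apply, LinearEquiv.coe_coe] at this
  rw [this, ← LinearMap.comp_apply, ← LinearMap.rTensor_comp, uCore_comul S' hS'1 hS'2]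
  rw [LinearMap.rTensor_comp, LinearMap.comp_apply, Coalgebra.rTensor_counit_comul]
  simp

end Sinv



section YDlem
universe v
variable {R : Type u} [CommRing R] {H : Type u} [Ring H] [HopfAlgebra R H]

local notation "S" => HopfAlgebra.antipode (R := R) (A := H)

/-- A representation of the comultiplication in an arbitrary universe. -/
def myRepr (h : H) : CoalgRepr.{u, u, v} R h where
  ι := ULift.{v} (Fin ((TensorProduct.exists_finset (R := R)
    (Coalgebra.comul (R := R) h)).choose.card))
  index := Finset.univ
  left := fun i => (((TensorProduct.exists_finset (R := R)
    (Coalgebra.comul (R := R) h)).choose.equivFin.symm i.down) : H × H).1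
  right := fun i => (((TensorProduct.exists_finset (R := R)
    (Coalgebra.comul (R := R) h)).choose.equivFin.symm i.down) : H × H).2
  eq := by
    set s := (TensorProduct.exists_finset (R := R) (Coalgebra.comul (R := R) h)).choose with hs
    have hspec : Coalgebra.comul (R := R) h = ∑ i ∈ s, i.1 ⊗ₜ[R] i.2 :=
      (TensorProduct.exists_finset (R := R) (Coalgebra.comul (R := R) h)).choose_spec
    rw [hspec]
    rw [show (Finset.univ : Finset (ULift.{v} (Fin s.card)))
        = Finset.univ.map (Equiv.ulift.symm.toEmbedding) from by simp [Finset.map_univ_equiv]]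
    rw [Finset.sum_map]
    simp only [Equiv.coe_toEmbedding, Equiv.ulift_symm_down]
    rw [Equiv.sum_comp s.equivFin.symm
      (fun x : {x // x ∈ s} => (x : H × H).1 ⊗ₜ[R] (x : H × H).2)]
    exact Finset.sum_attach s (fun x => x.1 ⊗ₜ[R] x.2)

variable {X : Type u} [AddCommGroup X] [Module R X]

/-- Any element of a tensor product has a finite-sum representation. -/
def treprOf (t : X ⊗[R] H) : TRepr R t where
  ι := X × H
  index := (TensorProduct.exists_finset (R := R) t).choose
  fst := Prod.fst
  snd := Prod.snd
  eq := (TensorProduct.exists_finset (R := R) t).choose_spec.symm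

variable (T : YD R H X)

lemma act_algebraMap (x : X) (r : R) : T.act (x ⊗ₜ[R] algebraMap R H r) = r • x := by
  rw [Algebra.algebraMap_eq_smul_one, tmul_smul, map_smul, T.act_one]

lemma repr_counit_smul {h : H} (r : CoalgRepr R h) :
    ∑ i ∈ r.index, Coalgebra.counit (R := R) (r.right i) • r.left i = h := by
  have h1 := congrArg (TensorProduct.rid R H) (CoalgRepr.sum_tmul_counit r)
  rw [map_sum] at h1
  simpa [-Coalgebra.sum_tmul_counit_eq] using h1

lemma trepr_counit_smul (x : X) (c : TRepr R (T.coact x)) :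
    ∑ k ∈ c.index, Coalgebra.counit (R := R) (c.snd k) • c.fst k = x := by
  set φ : X ⊗[R] H →ₗ[R] X :=
    (TensorProduct.rid R X).toLinearMap ∘ₗ LinearMap.lTensor X (Coalgebra.counit (R := R)) with hφ
  have h1 : ∀ k ∈ c.index, Coalgebra.counit (R := R) (c.snd k) • c.fst k
      = φ (c.fst k ⊗ₜ[R] c.snd k) := by
    intro k _; simp [hφ]
  rw [Finset.sum_congr rfl h1, ← map_sum, c.eq]
  exact T.coact_counit x

lemma lemB (y : X) (h : H) :
    T.act ((LinearMap.lTensor X (S)) (T.coact (T.act (y ⊗ₜ[R] h))))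
    = T.act ((LinearMap.lTensor X
        ((LinearMap.mulRight R ((S) ((S) h))) ∘ₗ (S))) (T.coact y)) := by
  set c : TRepr R (T.coact y) := treprOf (T.coact y) with hc
  set r : CoalgRepr R h := myRepr h with hr
  set r' : (i : r.ι) → CoalgRepr R (r.right i) := fun i => myRepr (r.right i) with hr'
  rw [T.compat y h r r' c]
  simp only [map_sum]
  have eA : (∑ i ∈ r.index, ∑ j ∈ (r' i).index, ∑ k ∈ c.index,
        T.act ((LinearMap.lTensor X (S)) (T.act (c.fst k ⊗ₜ[R] (r' i).left j) ⊗ₜ[R]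
          (Sm R H (r.left i) * c.snd k * (r' i).right j))))
      = ∑ i ∈ r.index, ∑ j ∈ (r' i).index, ∑ k ∈ c.index,
        T.act (c.fst k ⊗ₜ[R] (((r' i).left j * (S) ((r' i).right j)) *
          ((S) (c.snd k) * (S) ((S) (r.left i))))) := by
    refine Finset.sum_congr rfl fun i _ => Finset.sum_congr rfl fun j _ =>
      Finset.sum_congr rfl fun k _ => ?_
    rw [LinearMap.lTensor_tmul]
    have hanti : (S) (Sm R H (r.left i) * c.snd k * (r' i).right j)
        = (S) ((r' i).right j) * ((S) (c.snd k) * (S) ((S) (r.left i))) := by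
      rw [show Sm R H (r.left i) = (S) (r.left i) from rfl]
      rw [antipode_mul_anti, antipode_mul_anti]
    rw [hanti, ← T.act_mul]
    rw [show ((r' i).left j * ((S) ((r' i).right j) * ((S) (c.snd k) * (S) ((S) (r.left i)))))
      = (((r' i).left j * (S) ((r' i).right j)) * ((S) (c.snd k) * (S) ((S) (r.left i)))) from
        (mul_assoc _ _ _).symm]
  rw [eA]
  have eB : (∑ i ∈ r.index, ∑ j ∈ (r' i).index, ∑ k ∈ c.index,
        T.act (c.fst k ⊗ₜ[R] (((r' i).left j * (S) ((r' i).right j)) *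
          ((S) (c.snd k) * (S) ((S) (r.left i))))))
      = ∑ i ∈ r.index, ∑ k ∈ c.index, Coalgebra.counit (R := R) (r.right i) •
          T.act (c.fst k ⊗ₜ[R] ((S) (c.snd k) * (S) ((S) (r.left i)))) := by
    refine Finset.sum_congr rfl fun i _ => ?_
    rw [Finset.sum_comm]
    refine Finset.sum_congr rfl fun k _ => ?_
    set w : H := (S) (c.snd k) * (S) ((S) (r.left i)) with hw
    set ν : H →ₗ[R] X := T.act ∘ₗ TensorProduct.mk R X H (c.fst k) ∘ₗ
      LinearMap.mulRight R w with hν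
    have hterm : ∀ j ∈ (r' i).index,
        T.act (c.fst k ⊗ₜ[R] (((r' i).left j * (S) ((r' i).right j)) * w))
        = ν ((r' i).left j * (S) ((r' i).right j)) := by
      intro j _; simp [hν]
    rw [Finset.sum_congr rfl hterm, ← map_sum, CoalgRepr.sum_mul_antipode (r' i)]
    simp only [hν, LinearMap.comp_apply, LinearMap.mulRight_apply, TensorProduct.mk_apply]
    rw [← Algebra.smul_def, tmul_smul, map_smul]
  rw [eB, Finset.sum_comm]
  have eC : ∀ k ∈ c.index,
      (∑ i ∈ r.index, Coalgebra.counit (R := R) (r.right i) •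
        T.act (c.fst k ⊗ₜ[R] ((S) (c.snd k) * (S) ((S) (r.left i)))))
      = T.act (c.fst k ⊗ₜ[R] ((S) (c.snd k) * (S) ((S) h))) := by
    intro k _
    set μ : H →ₗ[R] X := T.act ∘ₗ TensorProduct.mk R X H (c.fst k) ∘ₗ
      LinearMap.mulLeft R ((S) (c.snd k)) ∘ₗ (S) ∘ₗ (S) with hμ
    have hterm : ∀ i ∈ r.index, Coalgebra.counit (R := R) (r.right i) •
        T.act (c.fst k ⊗ₜ[R] ((S) (c.snd k) * (S) ((S) (r.left i))))
        = Coalgebra.counit (R := R) (r.right i) • μ (r.left i) := by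
      intro i _; simp [hμ]
    rw [Finset.sum_congr rfl hterm]
    have hsum : ∑ i ∈ r.index, Coalgebra.counit (R := R) (r.right i) • μ (r.left i)
        = μ (∑ i ∈ r.index, Coalgebra.counit (R := R) (r.right i) • r.left i) := by
      rw [map_sum]
      exact Finset.sum_congr rfl fun i _ => (map_smul μ _ _).symm
    rw [hsum, repr_counit_smul r]
    simp [hμ]
  rw [Finset.sum_congr rfl eC]
  have hfin : ∑ k ∈ c.index, T.act (c.fst k ⊗ₜ[R] ((S) (c.snd k) * (S) ((S) h)))
      = T.act ((LinearMap.lTensor X ((LinearMap.mulRight R ((S) ((S) h))) ∘ₗ (S)))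
          (∑ k ∈ c.index, c.fst k ⊗ₜ[R] c.snd k)) := by
    rw [map_sum, map_sum]
    exact Finset.sum_congr rfl fun k _ => by simp
  rw [hfin, c.eq]

lemma lemC (S' : H →ₗ[R] H)
    (hS'1 : ∀ g : H, S' (HopfAlgebra.antipode (R := R) (A := H) g) = g)
    (hS'2 : ∀ g : H, HopfAlgebra.antipode (R := R) (A := H) (S' g) = g)
    (y : X) (h : H) :
    T.act ((LinearMap.lTensor X (S' ∘ₗ S')) (T.coact (T.act (y ⊗ₜ[R] h))))
    = T.act ((LinearMap.lTensor X
        ((LinearMap.mulRight R (S' (S' h))) ∘ₗ (S' ∘ₗ S'))) (T.coact y)) := by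
  set c : TRepr R (T.coact y) := treprOf (T.coact y) with hc
  set r : CoalgRepr R h := myRepr h with hr
  set r' : (i : r.ι) → CoalgRepr R (r.right i) := fun i => myRepr (r.right i) with hr'
  rw [T.compat y h r r' c]
  simp only [map_sum]
  have eA : (∑ i ∈ r.index, ∑ j ∈ (r' i).index, ∑ k ∈ c.index,
        T.act ((LinearMap.lTensor X (S' ∘ₗ S')) (T.act (c.fst k ⊗ₜ[R] (r' i).left j) ⊗ₜ[R]
          (Sm R H (r.left i) * c.snd k * (r' i).right j))))
      = ∑ i ∈ r.index, ∑ j ∈ (r' i).index, ∑ k ∈ c.index,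
        T.act (c.fst k ⊗ₜ[R] (((r' i).left j * S' (r.left i)) *
          (S' (S' (c.snd k)) * S' (S' ((r' i).right j))))) := by
    refine Finset.sum_congr rfl fun i _ => Finset.sum_congr rfl fun j _ =>
      Finset.sum_congr rfl fun k _ => ?_
    rw [LinearMap.lTensor_tmul]
    have hanti : (S' ∘ₗ S') (Sm R H (r.left i) * c.snd k * (r' i).right j)
        = (S' (r.left i) * S' (S' (c.snd k))) * S' (S' ((r' i).right j)) := by
      rw [show Sm R H (r.left i) = HopfAlgebra.antipode (R := R) (A := H) (r.left i) from rfl]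
      rw [LinearMap.comp_apply]
      rw [S'_mul S' hS'1 hS'2, S'_mul S' hS'1 hS'2, S'_mul S' hS'1 hS'2, hS'1,
        S'_mul S' hS'1 hS'2]
    rw [hanti, ← T.act_mul]
    rw [show ((r' i).left j * ((S' (r.left i) * S' (S' (c.snd k))) * S' (S' ((r' i).right j))))
      = (((r' i).left j * S' (r.left i)) * (S' (S' (c.snd k)) * S' (S' ((r' i).right j)))) from by
        rw [mul_assoc, mul_assoc]]
  rw [eA]
  have eB : (∑ i ∈ r.index, ∑ j ∈ (r' i).index, ∑ k ∈ c.index,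
        T.act (c.fst k ⊗ₜ[R] (((r' i).left j * S' (r.left i)) *
          (S' (S' (c.snd k)) * S' (S' ((r' i).right j))))))
      = ∑ k ∈ c.index, ∑ i ∈ r.index, ∑ j ∈ (r' i).index,
        T.act (c.fst k ⊗ₜ[R] (((r' i).left j * S' (r.left i)) *
          (S' (S' (c.snd k)) * S' (S' ((r' i).right j))))) := by
    refine Eq.trans (Finset.sum_congr rfl fun i _ => Finset.sum_comm) Finset.sum_comm
  rw [eB]
  have eC : ∀ k ∈ c.index,
      (∑ i ∈ r.index, ∑ j ∈ (r' i).index,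
        T.act (c.fst k ⊗ₜ[R] (((r' i).left j * S' (r.left i)) *
          (S' (S' (c.snd k)) * S' (S' ((r' i).right j))))))
      = T.act (c.fst k ⊗ₜ[R] (S' (S' (c.snd k)) * S' (S' h))) := by
    intro k _
    set Φ : H ⊗[R] H →ₗ[R] X := T.act ∘ₗ TensorProduct.mk R X H (c.fst k) ∘ₗ
      LinearMap.mul' R H ∘ₗ TensorProduct.map LinearMap.id
        (LinearMap.mulLeft R (S' (S' (c.snd k))) ∘ₗ S' ∘ₗ S') with hΦ
    have hterm : ∀ i ∈ r.index, ∀ j ∈ (r' i).index,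
        T.act (c.fst k ⊗ₜ[R] (((r' i).left j * S' (r.left i)) *
          (S' (S' (c.snd k)) * S' (S' ((r' i).right j)))))
        = Φ (((r' i).left j * S' (r.left i)) ⊗ₜ[R] (r' i).right j) := by
      intro i _ j _; simp [hΦ]
    rw [Finset.sum_congr rfl fun i hi => Finset.sum_congr rfl (hterm i hi)]
    have hmap : (∑ i ∈ r.index, ∑ j ∈ (r' i).index,
        Φ (((r' i).left j * S' (r.left i)) ⊗ₜ[R] (r' i).right j))
        = Φ (∑ i ∈ r.index, ∑ j ∈ (r' i).index,
            ((r' i).left j * S' (r.left i)) ⊗ₜ[R] (r' i).right j) := by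
      rw [map_sum]
      exact Finset.sum_congr rfl fun i _ => (map_sum Φ _ _).symm
    rw [hmap, sumD S' hS'1 hS'2 r r']
    simp [hΦ]
  rw [Finset.sum_congr rfl eC]
  have hfin : ∑ k ∈ c.index, T.act (c.fst k ⊗ₜ[R] (S' (S' (c.snd k)) * S' (S' h)))
      = T.act ((LinearMap.lTensor X ((LinearMap.mulRight R (S' (S' h))) ∘ₗ (S' ∘ₗ S')))
          (∑ k ∈ c.index, c.fst k ⊗ₜ[R] c.snd k)) := by
    rw [map_sum, map_sum]
    exact Finset.sum_congr rfl fun k _ => by simp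
  rw [hfin, c.eq]

lemma act_lTensor_algebraMap :
    T.act ∘ₗ LinearMap.lTensor X (Algebra.linearMap R H)
      = (TensorProduct.rid R X).toLinearMap := by
  apply TensorProduct.ext'
  intro x r
  simp [act_algebraMap T x r]

/-- `Φ(y ⊗ h) = y₍₀₎ ◁ (S(y₍₁₎) * h)`. -/
def Phi : X ⊗[R] H →ₗ[R] X :=
  T.act ∘ₗ LinearMap.lTensor X (LinearMap.mul' R H ∘ₗ LinearMap.rTensor H (S)) ∘ₗ
    (TensorProduct.assoc R X H H).toLinearMap ∘ₗ LinearMap.rTensor H T.coact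

lemma Phi_tmul (y : X) (g : H) :
    Phi T (y ⊗ₜ[R] g)
      = T.act ((LinearMap.lTensor X (LinearMap.mulRight R g ∘ₗ (S))) (T.coact y)) := by
  have key : T.act ∘ₗ (LinearMap.lTensor X (LinearMap.mul' R H ∘ₗ LinearMap.rTensor H (S))) ∘ₗ
      (TensorProduct.assoc R X H H).toLinearMap ∘ₗ (TensorProduct.mk R (X ⊗[R] H) H).flip g
      = T.act ∘ₗ LinearMap.lTensor X (LinearMap.mulRight R g ∘ₗ (S)) := by
    apply TensorProduct.ext'
    intro x h
    simp
  have h2 := LinearMap.congr_fun key (T.coact y)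
  simpa [Phi] using h2

lemma Phi_coact (x : X) : Phi T (T.coact x) = x := by
  have h1 := LinearMap.congr_fun T.coact_coassoc x
  simp only [LinearMap.comp_apply] at h1
  have h2 : Phi T (T.coact x) = T.act ((LinearMap.lTensor X (LinearMap.mul' R H ∘ₗ
      LinearMap.rTensor H (S))) ((LinearMap.lTensor X (Δm R H)) (T.coact x))) := by
    simp only [Phi, LinearMap.comp_apply]
    rw [← h1]
  rw [h2, ← LinearMap.comp_apply (LinearMap.lTensor X _), ← LinearMap.lTensor_comp]
  rw [show (LinearMap.mul' R H ∘ₗ LinearMap.rTensor H (S)) ∘ₗ (Δm R H)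
      = Algebra.linearMap R H ∘ₗ Coalgebra.counit from by
    rw [show Δm R H = (Coalgebra.comul (R := R) (A := H)) from rfl, LinearMap.comp_assoc]
    exact HopfAlgebra.mul_antipode_rTensor_comul]
  rw [LinearMap.lTensor_comp, LinearMap.comp_apply, ← LinearMap.comp_apply T.act,
    act_lTensor_algebraMap T]
  exact T.coact_counit x

variable (S' : H →ₗ[R] H)
  (hS'1 : ∀ g : H, S' (HopfAlgebra.antipode (R := R) (A := H) g) = g)
  (hS'2 : ∀ g : H, HopfAlgebra.antipode (R := R) (A := H) (S' g) = g)

/-- `Ψ(y ⊗ h) = y₍₀₎ ◁ (S'²(y₍₁₎) * S'(h))`. -/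
def Psi : X ⊗[R] H →ₗ[R] X :=
  T.act ∘ₗ LinearMap.lTensor X (LinearMap.mul' R H ∘ₗ TensorProduct.map (S' ∘ₗ S') S') ∘ₗ
    (TensorProduct.assoc R X H H).toLinearMap ∘ₗ LinearMap.rTensor H T.coact

lemma Psi_tmul (y : X) (g : H) :
    Psi T S' (y ⊗ₜ[R] g)
      = T.act ((LinearMap.lTensor X (LinearMap.mulRight R (S' g) ∘ₗ (S' ∘ₗ S')))
          (T.coact y)) := by
  have key : T.act ∘ₗ (LinearMap.lTensor X (LinearMap.mul' R H ∘ₗ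
      TensorProduct.map (S' ∘ₗ S') S')) ∘ₗ
      (TensorProduct.assoc R X H H).toLinearMap ∘ₗ (TensorProduct.mk R (X ⊗[R] H) H).flip g
      = T.act ∘ₗ LinearMap.lTensor X (LinearMap.mulRight R (S' g) ∘ₗ (S' ∘ₗ S')) := by
    apply TensorProduct.ext'
    intro x h
    simp
  have h2 := LinearMap.congr_fun key (T.coact y)
  simpa [Psi] using h2

include hS'1 hS'2 in
lemma gId : LinearMap.mul' R H ∘ₗ TensorProduct.map (S' ∘ₗ S') S' ∘ₗ
    (Coalgebra.comul (R := R) (A := H)) = Algebra.linearMap R H ∘ₗ Coalgebra.counit := by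
  ext h
  have h1 := sum_repr_apply (M := H)
    (LinearMap.mul' R H ∘ₗ TensorProduct.map (S' ∘ₗ S') S') (CoalgRepr.arbitrary R h)
  have h2 : ∀ i ∈ (CoalgRepr.arbitrary R h).index,
      (LinearMap.mul' R H ∘ₗ TensorProduct.map (S' ∘ₗ S') S')
        ((CoalgRepr.arbitrary R h).left i ⊗ₜ[R] (CoalgRepr.arbitrary R h).right i)
      = S' (S' ((CoalgRepr.arbitrary R h).left i)) *
          S' ((CoalgRepr.arbitrary R h).right i) := by
    intro i _; simp
  rw [Finset.sum_congr rfl h2,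
    sum_S'S'_left_mul_S'_right S' hS'1 hS'2 (CoalgRepr.arbitrary R h)] at h1
  simpa using h1.symm

include hS'1 hS'2 in
lemma Psi_coact (x : X) : Psi T S' (T.coact x) = x := by
  have h1 := LinearMap.congr_fun T.coact_coassoc x
  simp only [LinearMap.comp_apply] at h1
  have h2 : Psi T S' (T.coact x) = T.act ((LinearMap.lTensor X (LinearMap.mul' R H ∘ₗ
      TensorProduct.map (S' ∘ₗ S') S')) ((LinearMap.lTensor X (Δm R H)) (T.coact x))) := by
    simp only [Psi, LinearMap.comp_apply]
    rw [← h1]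
  rw [h2, ← LinearMap.comp_apply (LinearMap.lTensor X _), ← LinearMap.lTensor_comp]
  rw [show (LinearMap.mul' R H ∘ₗ TensorProduct.map (S' ∘ₗ S') S') ∘ₗ (Δm R H)
      = Algebra.linearMap R H ∘ₗ Coalgebra.counit from by
    rw [show Δm R H = (Coalgebra.comul (R := R) (A := H)) from rfl, LinearMap.comp_assoc]
    exact gId S' hS'1 hS'2]
  rw [LinearMap.lTensor_comp, LinearMap.comp_apply, ← LinearMap.comp_apply T.act,
    act_lTensor_algebraMap T]
  exact T.coact_counit x

end YDlem




/-- For a Yetter–Drinfeld module `X` over a Hopf algebra `H` with invertible antipode `S`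
(inverse `S'`), the square antipode `σ(x) = x₍₀₎ ◁ S(x₍₁₎)` is bijective, with inverse
`σ⁻¹(x) = x₍₀₎ ◁ S⁻²(x₍₁₎)`; this follows from the identity `x₍₀₎ ◁ (S(x₍₁₎) x₍₂₎) = x`. -/
theorem stmt4 (R : Type u) [CommRing R] (H : Type u) [Ring H] [HopfAlgebra R H]
    (X : Type u) [AddCommGroup X] [Module R X] (T : YD R H X)
    (S' : H →ₗ[R] H) (hS'1 : ∀ h, S' (Sm R H h) = h) (hS'2 : ∀ h, Sm R H (S' h) = h) :
    let σ : X →ₗ[R] X := sqAnt T.act T.coact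
    let σinv : X →ₗ[R] X := T.act ∘ₗ LinearMap.lTensor X (S' ∘ₗ S') ∘ₗ T.coact
    σ ∘ₗ σinv = LinearMap.id ∧ σinv ∘ₗ σ = LinearMap.id ∧ Function.Bijective σ ∧
    (∀ (x : X) (c : TRepr R (T.coact x)) (rc : (i : c.ι) → CoalgRepr R (c.snd i)),
      ∑ i ∈ c.index, ∑ j ∈ (rc i).index,
        T.act (c.fst i ⊗ₜ[R] (Sm R H ((rc i).left j) * (rc i).right j)) = x) := by
  intro σ σinv
  have hS1 : ∀ g : H, S' (HopfAlgebra.antipode (R := R) (A := H) g) = g := hS'1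
  have hS2 : ∀ g : H, HopfAlgebra.antipode (R := R) (A := H) (S' g) = g := hS'2
  have key1 : ∀ x : X, σ (σinv x) = x := by
    intro x
    set c : TRepr R (T.coact x) := treprOf (T.coact x) with hc
    have h1 : σinv x = ∑ k ∈ c.index, T.act (c.fst k ⊗ₜ[R] (S' (S' (c.snd k)))) := by
      have hmm : (∑ k ∈ c.index, T.act (c.fst k ⊗ₜ[R] S' (S' (c.snd k))))
          = T.act ((LinearMap.lTensor X (S' ∘ₗ S'))
              (∑ k ∈ c.index, c.fst k ⊗ₜ[R] c.snd k)) := by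
        rw [map_sum, map_sum]
        exact Finset.sum_congr rfl fun k _ => by simp
      rw [hmm, c.eq]
      rfl
    rw [h1, map_sum]
    have h2 : ∀ k ∈ c.index, σ (T.act (c.fst k ⊗ₜ[R] S' (S' (c.snd k))))
        = Phi T (c.fst k ⊗ₜ[R] c.snd k) := by
      intro k _
      have hB := lemB T (c.fst k) (S' (S' (c.snd k)))
      rw [hS2, hS2] at hB
      rw [Phi_tmul]
      exact hB
    rw [Finset.sum_congr rfl h2]
    have h3 : (∑ k ∈ c.index, Phi T (c.fst k ⊗ₜ[R] c.snd k)) = Phi T (T.coact x) := by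
      rw [← map_sum, c.eq]
    rw [h3, Phi_coact]
  have key2 : ∀ x : X, σinv (σ x) = x := by
    intro x
    set c : TRepr R (T.coact x) := treprOf (T.coact x) with hc
    have h1 : σ x = ∑ k ∈ c.index,
        T.act (c.fst k ⊗ₜ[R] (HopfAlgebra.antipode (R := R) (A := H) (c.snd k))) := by
      have hmm : (∑ k ∈ c.index,
            T.act (c.fst k ⊗ₜ[R] (HopfAlgebra.antipode (R := R) (A := H) (c.snd k))))
          = T.act ((LinearMap.lTensor X (Sm R H))
              (∑ k ∈ c.index, c.fst k ⊗ₜ[R] c.snd k)) := by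
        rw [map_sum, map_sum]
        exact Finset.sum_congr rfl fun k _ => by simp [Sm]
      rw [hmm, c.eq]
      rfl
    rw [h1, map_sum]
    have h2 : ∀ k ∈ c.index,
        σinv (T.act (c.fst k ⊗ₜ[R] (HopfAlgebra.antipode (R := R) (A := H) (c.snd k))))
        = Psi T S' (c.fst k ⊗ₜ[R] c.snd k) := by
      intro k _
      have hC := lemC T S' hS1 hS2 (c.fst k)
        (HopfAlgebra.antipode (R := R) (A := H) (c.snd k))
      rw [hS1] at hC
      rw [Psi_tmul]
      exact hC
    rw [Finset.sum_congr rfl h2]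
    have h3 : (∑ k ∈ c.index, Psi T S' (c.fst k ⊗ₜ[R] c.snd k))
        = Psi T S' (T.coact x) := by
      rw [← map_sum, c.eq]
    rw [h3, Psi_coact T S' hS1 hS2]
  refine ⟨LinearMap.ext fun x => key1 x, LinearMap.ext fun x => key2 x, ?_, ?_⟩
  · exact Function.bijective_iff_has_inverse.mpr ⟨σinv, key2, key1⟩
  · intro x c rc
    have h2 : ∀ i ∈ c.index, (∑ j ∈ (rc i).index,
        T.act (c.fst i ⊗ₜ[R] (Sm R H ((rc i).left j) * (rc i).right j)))
        = Coalgebra.counit (R := R) (c.snd i) • c.fst i := by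
      intro i _
      set ν : H →ₗ[R] X := T.act ∘ₗ TensorProduct.mk R X H (c.fst i) with hν
      have hterm : ∀ j ∈ (rc i).index,
          T.act (c.fst i ⊗ₜ[R] (Sm R H ((rc i).left j) * (rc i).right j))
          = ν (HopfAlgebra.antipode (R := R) (A := H) ((rc i).left j) * (rc i).right j) := by
        intro j _
        simp [hν, Sm]
      rw [Finset.sum_congr rfl hterm, ← map_sum, CoalgRepr.sum_antipode_mul (rc i)]
      simp only [hν, LinearMap.comp_apply, TensorProduct.mk_apply]
      exact act_algebraMap T (c.fst i) _
    rw [Finset.sum_congr rfl h2]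
    exact trepr_counit_smul T x c
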